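/- The set of Demazure roots belonging to a ray generator ρ_i, S_i ∩ M = {e ∈ M : ⟨ρ_i,e⟩ = −1 and ⟨ρ_j,e⟩ ≥ 0 for all j ≠ i}, is a finitely generated module over the monoid τ_i ∩ M = {f ∈ M : ⟨ρ_i,f⟩ = 0, ⟨ρ_j,f⟩ ≥ 0 for all j ≠ i}; moreover for any f ∈ τ_i ∩ M and any e ∈ S_i ∩ M, χ^f · ∂_{ρ_i,e} = ∂_{ρ_i,e+f} is a locally nilpotent derivation. -/

import Mathlib

/-- The homogeneous derivation `∂_{ρ,e}` of the (semi)group algebra, defined on the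
monomial basis by `∂_{ρ,e}(χ^m) = ⟨ρ,m⟩ χ^{m+e}`. -/
noncomputable def homDer (K : Type*) [Field K] {M : Type*} [AddCommGroup M]
    (ρ : M →+ ℤ) (e : M) :
    AddMonoidAlgebra K M →ₗ[K] AddMonoidAlgebra K M :=
  (Finsupp.lsum K fun m =>
    LinearMap.toSpanSingleton K (AddMonoidAlgebra K M)
      ((ρ m : ℤ) • AddMonoidAlgebra.single (m + e) (1 : K))) ∘ₗ
    (AddMonoidAlgebra.coeffLinearEquiv K).toLinearMap

/-- The set of Demazure roots belonging to the ray generator `ρ_i`: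
`S_i ∩ M = {e | ⟨ρ_i,e⟩ = −1, ⟨ρ_j,e⟩ ≥ 0 ∀ j ≠ i}`. -/
def IsDemazureRootAt {M : Type*} [AddCommGroup M] {k : ℕ}
    (ρs : Fin k → (M →+ ℤ)) (i : Fin k) (e : M) : Prop :=
  ρs i e = -1 ∧ ∀ j, j ≠ i → 0 ≤ ρs j e

/-- The monoid `τ_i ∩ M = {f | ⟨ρ_i,f⟩ = 0, ⟨ρ_j,f⟩ ≥ 0 ∀ j ≠ i}`. -/
def InFacetMonoid {M : Type*} [AddCommGroup M] {k : ℕ}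
    (ρs : Fin k → (M →+ ℤ)) (i : Fin k) (f : M) : Prop :=
  ρs i f = 0 ∧ ∀ j, j ≠ i → 0 ≤ ρs j f

theorem homDer_apply' (K : Type*) [Field K] {M : Type*} [AddCommGroup M]
    (ρ : M →+ ℤ) (e : M) (x : AddMonoidAlgebra K M) :
    homDer K ρ e x = x.coeff.sum fun m c => AddMonoidAlgebra.single (m + e) (c * (ρ m : K)) := by
  rw [homDer, LinearMap.comp_apply]; erw [Finsupp.lsum_apply]
  refine Finsupp.sum_congr fun m _ => ?_
  rw [LinearMap.toSpanSingleton_apply, ← Int.cast_smul_eq_zsmul K, smul_smul]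
  show ((x.coeff m) * (ρ m : K)) • AddMonoidAlgebra.single (m + e) (1:K) = _
  rw [AddMonoidAlgebra.smul_single, smul_eq_mul, mul_one]; rfl

theorem homDer_single' (K : Type*) [Field K] {M : Type*} [AddCommGroup M]
    (ρ : M →+ ℤ) (e : M) (m : M) (b : K) :
    homDer K ρ e (AddMonoidAlgebra.single m b) = AddMonoidAlgebra.single (m + e) (b * (ρ m : K)) := by
  rw [homDer_apply', AddMonoidAlgebra.coeff_single, Finsupp.sum_single_index]
  simp

theorem homDer_support' (K : Type*) [Field K] [CharZero K] {M : Type*} [AddCommGroup M]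
    (ρ : M →+ ℤ) (e : M) (x : AddMonoidAlgebra K M) {m' : M}
    (hm' : m' ∈ (homDer K ρ e x).coeff.support) :
    ∃ m ∈ x.coeff.support, ρ m ≠ 0 ∧ m' = m + e := by
  classical
  rw [homDer_apply', AddMonoidAlgebra.coeff_finsuppSum] at hm'
  have := Finsupp.support_sum hm'
  rw [Finset.mem_biUnion] at this
  obtain ⟨m, hm, hmem⟩ := this
  rw [AddMonoidAlgebra.coeff_single, Finsupp.mem_support_single] at hmem
  obtain ⟨rfl, hne⟩ := hmem
  refine ⟨m, hm, ?_, rfl⟩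
  intro h0
  simp [h0] at hne

theorem homDer_nilp' (K : Type*) [Field K] [CharZero K] {M : Type*} [AddCommGroup M]
    (ρ : M →+ ℤ) (d : M) (hd : ρ d = -1) :
    ∀ (b : ℕ) (x : AddMonoidAlgebra K M), (∀ m ∈ x.coeff.support, 0 ≤ ρ m ∧ ρ m ≤ b) →
      (⇑(homDer K ρ d))^[b + 1] x = 0 := by
  intro b
  induction b with
  | zero =>
    intro x hx
    rw [Function.iterate_one, homDer_apply']
    refine Finset.sum_eq_zero fun m hm => ?_
    have : ρ m = 0 := le_antisymm (by exact_mod_cast (hx m hm).2) (hx m hm).1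
    simp [this]
  | succ b ih =>
    intro x hx
    rw [Function.iterate_succ_apply]
    refine ih _ fun m' hm' => ?_
    obtain ⟨m, hm, hρ, rfl⟩ := homDer_support' K ρ d x hm'
    have h1 := (hx m hm).1
    have h2 := (hx m hm).2
    rw [map_add, hd]
    constructor
    · omega
    · push_cast at h2 ⊢; omega

theorem homDer_mul' (K : Type*) [Field K] {M : Type*} [AddCommGroup M]
    (ρ : M →+ ℤ) (e f : M) (x : AddMonoidAlgebra K M) :
    AddMonoidAlgebra.single f (1 : K) * homDer K ρ e x = homDer K ρ (e + f) x := by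
  induction x using AddMonoidAlgebra.induction_linear with
  | zero => simp
  | add x y hx hy => rw [map_add, map_add, mul_add, hx, hy]
  | single m b =>
    rw [homDer_single', homDer_single']
    show AddMonoidAlgebra.single f (1:K) * AddMonoidAlgebra.single (m+e) (b * (ρ m : K)) = _
    rw [AddMonoidAlgebra.single_mul_single, one_mul]
    show AddMonoidAlgebra.single (f + (m + e)) _ = _
    rw [show f + (m + e) = m + (e + f) by abel]

theorem stmt10_part1 {n k : ℕ} (ρs : Fin k → ((Fin n → ℤ) →+ ℤ)) (i : Fin k) :
    ∃ G : Finset (Fin n → ℤ), (∀ g ∈ G, IsDemazureRootAt ρs i g) ∧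
      ∀ e : Fin n → ℤ, IsDemazureRootAt ρs i e ↔
        ∃ g ∈ G, ∃ f : Fin n → ℤ, InFacetMonoid ρs i f ∧ e = g + f := by
  classical
  set S : Set (Fin n → ℤ) := {e | IsDemazureRootAt ρs i e} with hS
  set Φ : (Fin n → ℤ) → (Fin k → ℕ) := fun e j => (ρs j e).toNat with hΦ
  set T : Set (Fin k → ℕ) := Φ '' S with hT
  have hTpwo : T.IsPWO :=
    Set.isPWO_of_wellQuasiOrderedLE T
  set B : Set (Fin k → ℕ) := {v | v ∈ T ∧ ∀ w ∈ T, w ≤ v → w = v} with hB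
  have hmin : ∀ v ∈ T, ∃ w ∈ B, w ≤ v := by
    intro v hv
    set T' : Set (Fin k → ℕ) := {w | w ∈ T ∧ w ≤ v} with hT'
    have hwf : T'.IsWF := hTpwo.isWF.mono (fun w hw => hw.1)
    have hne : T'.Nonempty := ⟨v, hv, le_rfl⟩
    refine ⟨hwf.min hne, ⟨(hwf.min_mem hne).1, fun w hw hwa => ?_⟩, (hwf.min_mem hne).2⟩
    by_contra hcon
    exact hwf.not_lt_min hne ⟨hw, hwa.trans (hwf.min_mem hne).2⟩
      (lt_of_le_of_ne hwa hcon)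
  have hBfin : B.Finite := by
    have hanti : IsAntichain (· ≤ ·) B := fun a ha b hb hne hab => hne (hb.2 a ha.1 hab)
    exact hanti.finite_of_partiallyWellOrderedOn (hTpwo.mono (fun w hw => hw.1))
  have hrep0 : ∀ v : Fin k → ℕ, ∃ e : Fin n → ℤ, v ∈ B → e ∈ S ∧ Φ e = v := by
    intro v
    by_cases h : v ∈ B
    · obtain ⟨e, he, hev⟩ := h.1
      exact ⟨e, fun _ => ⟨he, hev⟩⟩
    · exact ⟨0, fun h' => absurd h' h⟩
  choose rep hrep using hrep0
  refine ⟨hBfin.toFinset.image rep, ?_, ?_⟩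
  · intro g hg
    simp only [Finset.mem_image, Set.Finite.mem_toFinset] at hg
    obtain ⟨v, hv, rfl⟩ := hg
    exact (hrep v hv).1
  · intro e
    constructor
    · intro he
      obtain ⟨w, hwB, hwle⟩ := hmin (Φ e) ⟨e, he, rfl⟩
      obtain ⟨hgS, hgΦ⟩ := hrep w hwB
      refine ⟨rep w, ?_, e - rep w, ⟨?_, ?_⟩, by abel⟩
      · simp only [Finset.mem_image, Set.Finite.mem_toFinset]
        exact ⟨w, hwB, rfl⟩
      · rw [map_sub, he.1, hgS.1]; ring
      · intro j hj
        have h1 : 0 ≤ ρs j e := he.2 j hj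
        have h2 : 0 ≤ ρs j (rep w) := hgS.2 j hj
        have h3 : (ρs j (rep w)).toNat ≤ (ρs j e).toNat := by
          have := hwle j
          rwa [← hgΦ] at this
        rw [map_sub]
        omega
    · rintro ⟨g, hg, f, hf, rfl⟩
      simp only [Finset.mem_image, Set.Finite.mem_toFinset] at hg
      obtain ⟨v, hv, rfl⟩ := hg
      have hgS := (hrep v hv).1
      constructor
      · rw [map_add, hgS.1, hf.1]; ring
      · intro j hj
        rw [map_add]
        exact add_nonneg (hgS.2 j hj) (hf.2 j hj)

/-- `S_i ∩ M` is a finitely generated module over the monoid `τ_i ∩ M`;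
moreover, for any `f ∈ τ_i ∩ M` and `e ∈ S_i ∩ M`, `χ^f · ∂_{ρ_i,e} = ∂_{ρ_i,e+f}` and
this is a locally nilpotent derivation of the semigroup algebra of the cone. -/
theorem stmt10 {K : Type*} [Field K] [CharZero K] (n k : ℕ)
    (ρs : Fin k → ((Fin n → ℤ) →+ ℤ)) (i : Fin k) :
    (∃ G : Finset (Fin n → ℤ), (∀ g ∈ G, IsDemazureRootAt ρs i g) ∧
        ∀ e : Fin n → ℤ, IsDemazureRootAt ρs i e ↔
          ∃ g ∈ G, ∃ f : Fin n → ℤ, InFacetMonoid ρs i f ∧ e = g + f)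
    ∧ ∀ (f e : Fin n → ℤ), InFacetMonoid ρs i f → IsDemazureRootAt ρs i e →
        (∀ x : AddMonoidAlgebra K (Fin n → ℤ),
          AddMonoidAlgebra.single f (1 : K) * homDer K (ρs i) e x
            = homDer K (ρs i) (e + f) x)
        ∧ ∀ x : AddMonoidAlgebra K (Fin n → ℤ),
            (∀ m ∈ x.coeff.support, ∀ j, 0 ≤ ρs j m) →
            ∃ N : ℕ, (⇑(homDer K (ρs i) (e + f)))^[N] x = 0 := by
  refine ⟨stmt10_part1 ρs i, fun f e hf he => ⟨fun x => homDer_mul' K (ρs i) e f x, ?_⟩⟩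
  intro x hx
  have hd : ρs i (e + f) = -1 := by rw [map_add, he.1, hf.1]; ring
  refine ⟨x.coeff.support.sup (fun m => (ρs i m).toNat) + 1,
    homDer_nilp' K (ρs i) (e + f) hd _ x fun m hm => ⟨hx m hm i, ?_⟩⟩
  have h1 : (ρs i m).toNat ≤ x.coeff.support.sup (fun m => (ρs i m).toNat) :=
    Finset.le_sup (f := fun m => (ρs i m).toNat) hm
  have h2 := hx m hm i
  omega
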